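/- For positive integers m, p with p | m and p > 1, each polynomial h_{j-1}(x_j^m,...,x_n^m) · (x_j ⋯ x_n)^{m/p} for j = 1,...,n lies in the ideal of ℂ[x_1,...,x_n] generated by the G(m,p,n)-invariant polynomials of positive degree, namely the ideal generated by f_i = ∑_{ℓ=1}^n x_ℓ^{mi} for 1 ≤ i ≤ n−1 together with f_n = (x_1 ⋯ x_n)^{m/p}. -/

import Mathlib

open Finset MvPolynomial

section Aux

variable {σ : Type*} [DecidableEq σ]

noncomputable def EE (s : Finset σ) (k : ℕ) : MvPolynomial σ ℂ :=
  ∑ t ∈ s.powersetCard k, ∏ i ∈ t, X i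

noncomputable def HH (s : Finset σ) (d : ℕ) : MvPolynomial σ ℂ :=
  ∑ μ ∈ s.sym d, (μ.1.map X).prod

omit [DecidableEq σ] in
@[simp] lemma EE_zero (s : Finset σ) : EE s 0 = 1 := by simp [EE]

@[simp] lemma HH_zero (s : Finset σ) : HH s 0 = 1 := by
  rw [HH, Finset.sym_zero, sum_singleton]
  rfl

omit [DecidableEq σ] in
@[simp] lemma EE_empty (k : ℕ) : EE (∅ : Finset σ) (k + 1) = 0 := by
  rw [EE, Finset.powersetCard_eq_empty.mpr (by simp)]; simp

@[simp] lemma HH_empty (d : ℕ) : HH (∅ : Finset σ) (d + 1) = 0 := by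
  simp [HH, Finset.sym_empty]

lemma EE_rec {a : σ} {s : Finset σ} (ha : a ∉ s) (k : ℕ) :
    EE (insert a s) (k + 1) = EE s (k + 1) + X a * EE s k := by
  have hinj : ∀ t₁ ∈ s.powersetCard k, ∀ t₂ ∈ s.powersetCard k,
      insert a t₁ = insert a t₂ → t₁ = t₂ := by
    intro t₁ h₁ t₂ h₂ h
    have h₁' : a ∉ t₁ := fun h' => ha ((mem_powersetCard.mp h₁).1 h')
    have h₂' : a ∉ t₂ := fun h' => ha ((mem_powersetCard.mp h₂).1 h')
    rw [← erase_insert h₁', h, erase_insert h₂']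
  rw [EE, powersetCard_succ_insert ha, sum_union]
  · congr 1
    rw [sum_image hinj, EE, mul_sum]
    refine sum_congr rfl fun t ht => ?_
    have hat : a ∉ t := fun h => ha ((mem_powersetCard.mp ht).1 h)
    rw [prod_insert hat]
  · rw [Finset.disjoint_left]
    rintro t ht₁ ht₂
    rw [mem_image] at ht₂
    obtain ⟨u, hu, rfl⟩ := ht₂
    exact ha ((mem_powersetCard.mp ht₁).1 (mem_insert_self a u))

lemma sym_insert_eq {a : σ} {s : Finset σ} (ha : a ∉ s) (d : ℕ) :
    (insert a s).sym (d + 1) =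
      s.sym (d + 1) ∪ ((insert a s).sym d).image (Sym.cons a) := by
  ext μ
  simp only [mem_union, mem_image, mem_sym_iff, mem_insert]
  constructor
  · intro h
    by_cases haμ : a ∈ μ
    · right
      refine ⟨μ.erase a haμ, ?_, Sym.cons_erase haμ⟩
      intro x hx
      have hxμ : x ∈ μ := by
        rw [← Sym.mem_coe, Sym.coe_erase] at hx
        exact Sym.mem_coe.mp (Multiset.mem_of_mem_erase hx)
      exact h x hxμ
    · left
      intro x hx
      rcases h x hx with h1 | h2
      · exact absurd (h1 ▸ hx) haμ
      · exact h2
  · rintro (h | ⟨ν, hν, rfl⟩)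
    · exact fun x hx => Or.inr (h x hx)
    · intro x hx
      rcases Sym.mem_cons.mp hx with h1 | h2
      · exact Or.inl h1
      · exact hν x h2

lemma HH_rec {a : σ} {s : Finset σ} (ha : a ∉ s) (d : ℕ) :
    HH (insert a s) (d + 1) = HH s (d + 1) + X a * HH (insert a s) d := by
  have hinj : ∀ μ₁ ∈ (insert a s).sym d, ∀ μ₂ ∈ (insert a s).sym d,
      Sym.cons a μ₁ = Sym.cons a μ₂ → μ₁ = μ₂ := by
    intro μ₁ _ μ₂ _ h
    have h2 : (a ::ₘ μ₁.1) = (a ::ₘ μ₂.1) := congrArg Subtype.val h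
    exact Sym.coe_injective (Multiset.cons_inj_right a |>.mp h2)
  rw [HH, sym_insert_eq ha, sum_union]
  · congr 1
    rw [sum_image hinj, HH, mul_sum]
    refine sum_congr rfl fun μ _ => ?_
    show (Multiset.map X (a ::ₘ μ.1)).prod = X a * (Multiset.map X μ.1).prod
    rw [Multiset.map_cons, Multiset.prod_cons]
  · rw [Finset.disjoint_left]
    intro μ h1 h2
    rw [mem_image] at h2
    obtain ⟨ν, _, rfl⟩ := h2
    have : a ∈ s := (mem_sym_iff.mp h1) a (Sym.mem_cons_self a ν)
    exact ha this

lemma alt_sum (e : ℕ) (s : Finset σ) :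
    ∑ k ∈ range (e + 2), (-1 : MvPolynomial σ ℂ) ^ k * EE s k * HH s (e + 1 - k) = 0 := by
  induction s using Finset.induction_on with
  | empty =>
    rw [sum_range_succ']
    simp
  | @insert a s ha ih =>
    have hE : ∀ k ∈ range (e + 2), (-1 : MvPolynomial σ ℂ) ^ k * EE (insert a s) k *
          HH (insert a s) (e + 1 - k)
        = (-1) ^ k * EE s k * HH (insert a s) (e + 1 - k)
          + (-1) ^ k * (if k = 0 then 0 else X a * EE s (k - 1)) * HH (insert a s) (e + 1 - k) := by
      intro k _
      rcases k with _ | k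
      · simp
      · rw [EE_rec ha, if_neg (Nat.succ_ne_zero k), Nat.add_sub_cancel]
        ring
    rw [Finset.sum_congr rfl hE, Finset.sum_add_distrib]
    have hSum2 : ∑ k ∈ range (e + 2), (-1 : MvPolynomial σ ℂ) ^ k *
          (if k = 0 then 0 else X a * EE s (k - 1)) * HH (insert a s) (e + 1 - k)
        = -(X a * ∑ k ∈ range (e + 1),
            (-1 : MvPolynomial σ ℂ) ^ k * EE s k * HH (insert a s) (e - k)) := by
      rw [sum_range_succ', mul_sum, ← Finset.sum_neg_distrib]
      have h0 : ((-1 : MvPolynomial σ ℂ)) ^ 0 *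
          (if (0 : ℕ) = 0 then (0 : MvPolynomial σ ℂ) else X a * EE s (0 - 1)) *
          HH (insert a s) (e + 1 - 0) = 0 := by simp
      rw [h0, add_zero]
      refine Finset.sum_congr rfl fun k _ => ?_
      rw [if_neg (Nat.succ_ne_zero k), Nat.add_sub_cancel, Nat.succ_sub_succ]
      ring
    have hH : ∀ k ∈ range (e + 2), (HH (insert a s) (e + 1 - k) : MvPolynomial σ ℂ)
        = HH s (e + 1 - k) + (if k ≤ e then X a * HH (insert a s) (e - k) else 0) := by
      intro k hk
      rcases Nat.lt_or_ge k (e + 1) with h | h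
      · have hk' : k ≤ e := Nat.lt_succ_iff.mp h
        rw [if_pos hk']
        have h2 : e + 1 - k = (e - k) + 1 := by omega
        rw [h2, HH_rec ha]
      · have hk2 := mem_range.mp hk
        have : k = e + 1 := by omega
        subst this
        simp
    have hSum1 : ∑ k ∈ range (e + 2), (-1 : MvPolynomial σ ℂ) ^ k * EE s k *
          HH (insert a s) (e + 1 - k)
        = X a * ∑ k ∈ range (e + 1),
            (-1 : MvPolynomial σ ℂ) ^ k * EE s k * HH (insert a s) (e - k) := by
      calc ∑ k ∈ range (e + 2), (-1 : MvPolynomial σ ℂ) ^ k * EE s k * HH (insert a s) (e + 1 - k)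
          = ∑ k ∈ range (e + 2), ((-1 : MvPolynomial σ ℂ) ^ k * EE s k * HH s (e + 1 - k)
            + (-1) ^ k * EE s k * (if k ≤ e then X a * HH (insert a s) (e - k) else 0)) := by
            refine Finset.sum_congr rfl fun k hk => ?_
            rw [hH k hk]; ring
        _ = (∑ k ∈ range (e + 2), (-1 : MvPolynomial σ ℂ) ^ k * EE s k * HH s (e + 1 - k))
            + ∑ k ∈ range (e + 2), (-1 : MvPolynomial σ ℂ) ^ k * EE s k *
              (if k ≤ e then X a * HH (insert a s) (e - k) else 0) := Finset.sum_add_distrib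
        _ = X a * ∑ k ∈ range (e + 1),
            (-1 : MvPolynomial σ ℂ) ^ k * EE s k * HH (insert a s) (e - k) := by
            rw [ih, zero_add, sum_range_succ, if_neg (by omega), mul_zero, add_zero, mul_sum]
            refine Finset.sum_congr rfl fun k hk => ?_
            rw [if_pos (Nat.lt_succ_iff.mp (mem_range.mp hk))]
            ring
    rw [hSum1, hSum2]
    ring

variable [Fintype σ]

lemma HH_univ (d : ℕ) : HH (univ : Finset σ) d = hsymm σ ℂ d := by
  rw [HH, Finset.sym_univ, hsymm]

lemma EE_univ (k : ℕ) : EE (univ : Finset σ) k = esymm σ ℂ k := rfl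

lemma esymm_mem (k : ℕ) :
    esymm σ ℂ (k + 1) ∈ Ideal.span ((fun i => psum σ ℂ i) '' Set.Icc 1 (k + 1)) := by
  have h := MvPolynomial.mul_esymm_eq_sum σ ℂ (k + 1)
  have hC : (C (((k + 1 : ℕ) : ℂ))⁻¹ : MvPolynomial σ ℂ) * (((k + 1 : ℕ) : MvPolynomial σ ℂ)) = 1 := by
    rw [← C_eq_coe_nat, ← map_mul,
      inv_mul_cancel₀ (by exact_mod_cast Nat.succ_ne_zero k : ((k + 1 : ℕ) : ℂ) ≠ 0), C_1]
  have heq : esymm σ ℂ (k + 1) =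
      C (((k + 1 : ℕ) : ℂ))⁻¹ * (((k + 1 : ℕ) : MvPolynomial σ ℂ) * esymm σ ℂ (k + 1)) := by
    rw [← mul_assoc, hC, one_mul]
  rw [heq, h]
  refine Ideal.mul_mem_left _ _ (Ideal.mul_mem_left _ _ (Ideal.sum_mem _ fun a ha => ?_))
  rw [Finset.mem_filter, Finset.HasAntidiagonal.mem_antidiagonal] at ha
  have h2 : a.2 ∈ Set.Icc 1 (k + 1) := ⟨by omega, by omega⟩
  exact Ideal.mul_mem_left _ _ (Ideal.subset_span ⟨a.2, h2, rfl⟩)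

lemma hsymm_mem (d : ℕ) :
    hsymm σ ℂ (d + 1) ∈ Ideal.span ((fun i => psum σ ℂ i) '' Set.Icc 1 (d + 1)) := by
  have h := alt_sum (σ := σ) d univ
  rw [sum_range_succ'] at h
  have h0 : ((-1 : MvPolynomial σ ℂ)) ^ 0 * EE univ 0 * HH univ (d + 1 - 0) = hsymm σ ℂ (d + 1) := by
    rw [HH_univ]; simp
  rw [h0] at h
  have h1 : hsymm σ ℂ (d + 1)
      = -∑ k ∈ range (d + 1), (-1 : MvPolynomial σ ℂ) ^ (k + 1) * EE univ (k + 1) *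
          HH univ (d + 1 - (k + 1)) := by
    linear_combination h
  rw [h1]
  refine neg_mem (Ideal.sum_mem _ fun k hk => ?_)
  have hkd := mem_range.mp hk
  have h2 : esymm σ ℂ (k + 1) ∈ Ideal.span ((fun i => psum σ ℂ i) '' Set.Icc 1 (d + 1)) :=
    Ideal.span_mono (Set.image_mono (Set.Icc_subset_Icc le_rfl (by omega))) (esymm_mem k)
  have h3 : (-1 : MvPolynomial σ ℂ) ^ (k + 1) * EE univ (k + 1) * HH univ (d + 1 - (k + 1))
      = ((-1 : MvPolynomial σ ℂ) ^ (k + 1) * HH univ (d + 1 - (k + 1))) * esymm σ ℂ (k + 1) := by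
    rw [EE_univ]; ring
  rw [h3]
  exact Ideal.mul_mem_left _ _ h2

lemma key (D : ℕ) (t : Finset σ) :
    ∀ d ≤ D, HH tᶜ d - (-1) ^ d * EE t d ∈ Ideal.span ((fun i => psum σ ℂ i) '' Set.Icc 1 D) := by
  induction t using Finset.induction_on with
  | empty =>
    intro d hd
    rcases d with _ | e
    · simpa using Ideal.zero_mem _
    · rw [Finset.compl_empty, HH_univ, EE_empty, mul_zero, sub_zero]
      exact Ideal.span_mono (Set.image_mono (Set.Icc_subset_Icc le_rfl hd)) (hsymm_mem e)
  | @insert a t hat ih =>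
    intro d hd
    rcases d with _ | e
    · simpa using Ideal.zero_mem _
    have haS : a ∈ tᶜ := Finset.mem_compl.mpr hat
    have ha' : a ∉ (insert a t)ᶜ := by simp
    have hcompl : (insert a t)ᶜ = tᶜ.erase a := Finset.compl_insert
    have hins : insert a ((insert a t)ᶜ) = tᶜ := by rw [hcompl, insert_erase haS]
    have hrec : HH tᶜ (e + 1) = HH ((insert a t)ᶜ) (e + 1) + X a * HH tᶜ e := by
      conv_lhs => rw [← hins]
      rw [HH_rec ha' e, hins]
    have hrec' : HH ((insert a t)ᶜ) (e + 1) = HH tᶜ (e + 1) - X a * HH tᶜ e := by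
      rw [hrec]; ring
    have heq : HH ((insert a t)ᶜ) (e + 1) - (-1) ^ (e + 1) * EE (insert a t) (e + 1)
        = (HH tᶜ (e + 1) - (-1) ^ (e + 1) * EE t (e + 1))
          - X a * (HH tᶜ e - (-1) ^ e * EE t e) := by
      rw [hrec', EE_rec hat]; ring
    rw [heq]
    exact Ideal.sub_mem _ (ih (e + 1) hd) (Ideal.mul_mem_left _ _ (ih e (by omega)))


end Aux

/-- `h_{j-1}(x_j^m, …, x_n^m)`, the complete homogeneous symmetric polynomial of degree `j-1`
in the variables `x_j, …, x_n` evaluated at `m`-th powers; here `j : Fin n` is the 0-indexed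
version of the 1-indexed `j` of the statement (so the degree is `j.1`). -/
noncomputable def hsub (n m : ℕ) (j : Fin n) : MvPolynomial (Fin n) ℂ :=
  aeval (fun k : Fin n => (X k : MvPolynomial (Fin n) ℂ) ^ m)
    (rename (Subtype.val : {i : Fin n // j ≤ i} → Fin n) (hsymm {i : Fin n // j ≤ i} ℂ j.1))


lemma rename_hsymm_eq (n : ℕ) (j : Fin n) (d : ℕ) :
    rename (Subtype.val : {i : Fin n // j ≤ i} → Fin n) (hsymm {i : Fin n // j ≤ i} ℂ d)
      = HH (univ.filter fun i : Fin n => j ≤ i) d := by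
  rw [hsymm, map_sum, HH]
  refine Finset.sum_bij (fun μ _ => Sym.map Subtype.val μ) ?_ ?_ ?_ ?_
  · intro μ _
    rw [mem_sym_iff]
    intro a ha
    obtain ⟨x, _, rfl⟩ := Sym.mem_map.mp ha
    exact mem_filter.mpr ⟨mem_univ _, x.2⟩
  · intro μ₁ _ μ₂ _ h
    exact Sym.map_injective Subtype.val_injective _ h
  · intro μ hμ
    have hall : ∀ x ∈ μ.1, j ≤ x := by
      intro x hx
      exact (mem_filter.mp (mem_sym_iff.mp hμ x hx)).2
    refine ⟨⟨μ.1.attach.map (fun x => (⟨x.1, hall x.1 x.2⟩ : {i : Fin n // j ≤ i})),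
      by simp [Multiset.card_attach, μ.2]⟩, mem_univ _, ?_⟩
    apply Sym.coe_injective
    show Multiset.map Subtype.val (Multiset.map _ μ.1.attach) = μ.1
    rw [Multiset.map_map]
    exact Multiset.attach_map_val μ.1
  · intro μ _
    rw [map_multiset_prod]
    congr 1
    show Multiset.map (rename _) (Multiset.map X μ.1) = Multiset.map X (Multiset.map Subtype.val μ.1)
    rw [Multiset.map_map, Multiset.map_map]
    exact Multiset.map_congr rfl fun x _ => rename_X _ x

/-- For `p ∣ m`, `p > 1`, each `h_{j-1}(x_j^m,…,x_n^m)·(x_j⋯x_n)^{m/p}` lies in the ideal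
generated by the basic invariants `f_i = ∑_ℓ x_ℓ^{mi}` (`1 ≤ i ≤ n-1`) and
`f_n = (x_1⋯x_n)^{m/p}` of `G(m,p,n)`. -/
theorem hsub_mul_mem_invariant_ideal (n m p : ℕ) (hp : 1 < p) (hpm : p ∣ m) (j : Fin n) :
    hsub n m j * ∏ i ∈ Finset.univ.filter (fun i : Fin n => j ≤ i), (X i : MvPolynomial (Fin n) ℂ) ^ (m / p)
      ∈ Ideal.span
        ((Set.range fun i : Fin (n - 1) =>
            ∑ ℓ : Fin n, (X ℓ : MvPolynomial (Fin n) ℂ) ^ (m * (i.1 + 1))) ∪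
          {(∏ ℓ : Fin n, (X ℓ : MvPolynomial (Fin n) ℂ)) ^ (m / p)}) := by
  classical
  set I := Ideal.span
        ((Set.range fun i : Fin (n - 1) =>
            ∑ ℓ : Fin n, (X ℓ : MvPolynomial (Fin n) ℂ) ^ (m * (i.1 + 1))) ∪
          {(∏ ℓ : Fin n, (X ℓ : MvPolynomial (Fin n) ℂ)) ^ (m / p)}) with hI
  set φ := (aeval (fun k : Fin n => (X k : MvPolynomial (Fin n) ℂ) ^ m) :
      MvPolynomial (Fin n) ℂ →ₐ[ℂ] MvPolynomial (Fin n) ℂ) with hφdef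
  set s := univ.filter (fun i : Fin n => j ≤ i) with hs
  set t := univ.filter (fun i : Fin n => ¬ j ≤ i) with ht
  have hts : tᶜ = s := by
    rw [ht, Finset.compl_filter, hs]
    simp
  have htIio : t = Finset.Iio j := by
    ext i; simp [ht, Finset.mem_Iio, not_le]
  have hcard : t.card = j.1 := by rw [htIio, Fin.card_Iio]
  have hEt : EE t j.1 = ∏ i ∈ t, X i := by
    rw [EE, ← hcard, powersetCard_self, sum_singleton]
  have hkey := key (n - 1) t j.1 (by omega : j.1 ≤ n - 1)
  rw [hts, hEt] at hkey
  have hsub_eq : hsub n m j = φ (HH s j.1) := by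
    rw [hsub, rename_hsymm_eq, hs]
  have hdecomp : HH s j.1 = (HH s j.1 - (-1) ^ j.1 * ∏ i ∈ t, X i)
      + (-1) ^ j.1 * ∏ i ∈ t, X i := by ring
  rw [hsub_eq, hdecomp, map_add, add_mul]
  refine Ideal.add_mem _ ?_ ?_
  · refine Ideal.mul_mem_right _ _ ?_
    have h1 : φ (HH s j.1 - (-1) ^ j.1 * ∏ i ∈ t, X i)
        ∈ Ideal.map φ (Ideal.span ((fun i => psum (Fin n) ℂ i) '' Set.Icc 1 (n - 1))) :=
      Ideal.mem_map_of_mem φ hkey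
    rw [Ideal.map_span] at h1
    refine Ideal.span_le.mpr ?_ h1
    rintro x ⟨y, ⟨i, hi, rfl⟩, rfl⟩
    obtain ⟨hi1, hi2⟩ := hi
    refine Ideal.subset_span (Set.mem_union_left _ ⟨⟨i - 1, by omega⟩, ?_⟩)
    show ∑ ℓ : Fin n, (X ℓ : MvPolynomial (Fin n) ℂ) ^ (m * ((i - 1) + 1)) = φ (psum (Fin n) ℂ i)
    rw [show (i - 1) + 1 = i from by omega, psum, map_sum]
    refine Finset.sum_congr rfl fun ℓ _ => ?_
    rw [map_pow, hφdef]
    simp [pow_mul]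
  · have hφprod : φ ((-1) ^ j.1 * ∏ i ∈ t, X i)
        = (-1) ^ j.1 * ∏ i ∈ t, (X i : MvPolynomial (Fin n) ℂ) ^ m := by
      rw [map_mul, map_pow, map_neg, map_one, map_prod]
      simp [hφdef]
    rw [hφprod]
    have heq2 : (((-1 : MvPolynomial (Fin n) ℂ)) ^ j.1 * ∏ i ∈ t, (X i : MvPolynomial (Fin n) ℂ) ^ m)
          * ∏ i ∈ s, (X i : MvPolynomial (Fin n) ℂ) ^ (m / p)
        = (((-1 : MvPolynomial (Fin n) ℂ)) ^ j.1 * ∏ i ∈ t, (X i : MvPolynomial (Fin n) ℂ) ^ (m - m / p))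
          * (∏ ℓ : Fin n, (X ℓ : MvPolynomial (Fin n) ℂ)) ^ (m / p) := by
      rw [← Finset.prod_pow]
      rw [← Finset.prod_mul_prod_compl t (fun ℓ => (X ℓ : MvPolynomial (Fin n) ℂ) ^ (m / p)), hts]
      have hsplit : ∀ i ∈ t, (X i : MvPolynomial (Fin n) ℂ) ^ m
          = X i ^ (m - m / p) * X i ^ (m / p) := by
        intro i _
        rw [← pow_add, Nat.sub_add_cancel (Nat.div_le_self m p)]
      rw [Finset.prod_congr rfl hsplit, Finset.prod_mul_distrib]
      ring
    rw [heq2]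
    refine Ideal.mul_mem_left _ _ ?_
    exact Ideal.subset_span (Set.mem_union_right _ rfl)
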